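/- Let F be a field and let r be any integer. Then the function [u,v]_r := {u^r,v}, from F^*×F^* to K_2(2,F), is a Steinberg cocycle; that is, for all t,u,v∈F^*: [t,u]_r[tu,v]_r=[t,uv]_r[u,v]_r, [1,1]_r=1, [u,v]_r=[u^{-1},v^{-1}]_r, and [u,v]_r=[u,(1-u)v]_r whenever u≠1. -/

import Mathlib

/-!
Common definitions: presentations of the abelian groups `K₂(F)`, `K₂(2,F)` and `K₂(A,F)`
(Rehmann–Morita).  "The abelian group generated by symbols subject to relations" is
formalized as the abelianization of the corresponding presented group.
-/

variable (F : Type) [Field F]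

/-- Relators for `K₂(F)`: the Steinberg symbol relations (A1)-(A3).
(A3) `{u, 1-u} = 1` (for `u ≠ 1`) is encoded as: for units `u, w` with `(w : F) = 1 - u`
(which forces `u ≠ 1`), `{u, w}` is a relator. -/
def K2Rels : Set (FreeGroup (Fˣ × Fˣ)) :=
  {r | (∃ t u v : Fˣ, r = FreeGroup.of (t * u, v) * (FreeGroup.of (t, v) * FreeGroup.of (u, v))⁻¹) ∨
       (∃ t u v : Fˣ, r = FreeGroup.of (t, u * v) * (FreeGroup.of (t, u) * FreeGroup.of (t, v))⁻¹) ∨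
       (∃ u w : Fˣ, (w : F) = 1 - (u : F) ∧ r = FreeGroup.of (u, w))}

/-- `K₂(F)`: the abelian group generated by the symbols `{u,v}`, `u v ∈ Fˣ`,
subject to the Steinberg symbol relations (A1)-(A3). -/
def K2 : Type := Abelianization (PresentedGroup (K2Rels F))

noncomputable instance : CommGroup (K2 F) := inferInstanceAs (CommGroup (Abelianization _))

/-- The Steinberg symbol `{u,v}` in `K₂(F)`. -/
def K2.sym (u v : Fˣ) : K2 F := Abelianization.of (PresentedGroup.of (u, v))

/-- The subgroup `m·K₂(F)` of `m`-th powers of elements of `K₂(F)`. -/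
noncomputable def K2.powSubgroup (m : ℕ) : Subgroup (K2 F) := Subgroup.closure {x | ∃ y : K2 F, x = y ^ m}

/-- Relators for `K₂(2,F)`: the Steinberg cocycle relations (B1)-(B4). -/
def K2SLRels : Set (FreeGroup (Fˣ × Fˣ)) :=
  {r | (∃ t u v : Fˣ, r = FreeGroup.of (t, u) * FreeGroup.of (t * u, v) *
          (FreeGroup.of (t, u * v) * FreeGroup.of (u, v))⁻¹) ∨
       (r = FreeGroup.of ((1 : Fˣ), (1 : Fˣ))) ∨
       (∃ u v : Fˣ, r = FreeGroup.of (u, v) * (FreeGroup.of (u⁻¹, v⁻¹))⁻¹) ∨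
       (∃ u v w : Fˣ, (w : F) = 1 - (u : F) ∧
          r = FreeGroup.of (u, v) * (FreeGroup.of (u, w * v))⁻¹)}

/-- `K₂(2,F)`: the abelian group generated by the symbols `{u,v}`, `u v ∈ Fˣ`,
subject to the Steinberg cocycle relations (B1)-(B4). -/
def K2SL : Type := Abelianization (PresentedGroup (K2SLRels F))

noncomputable instance : CommGroup (K2SL F) := inferInstanceAs (CommGroup (Abelianization _))

/-- The Steinberg cocycle `{u,v}` in `K₂(2,F)`. -/
def K2SL.sym (u v : Fˣ) : K2SL F := Abelianization.of (PresentedGroup.of (u, v))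

/-- The subgroup `m⟨{u²,v}⟩` of `K₂(2,F)` generated by the elements `{u²,v}^m`, `u v ∈ Fˣ`. -/
noncomputable def K2SL.sqSubgroup (m : ℤ) : Subgroup (K2SL F) :=
  Subgroup.closure {x | ∃ u v : Fˣ, x = (K2SL.sym F (u ^ 2) v) ^ m}

/-- A generalized Cartan matrix: `a_{ii} = 2`, off-diagonal entries `≤ 0`,
and `a_{ij} = 0 ↔ a_{ji} = 0`. -/
def IsGCM {n : ℕ} (A : Matrix (Fin n) (Fin n) ℤ) : Prop :=
  (∀ i, A i i = 2) ∧ (∀ i j, i ≠ j → A i j ≤ 0) ∧ (∀ i j, A i j = 0 ↔ A j i = 0)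

/-- Relators for `K₂(A,F)`: the Rehmann–Morita relations (L1)-(L7). -/
def K2ARels {n : ℕ} (A : Matrix (Fin n) (Fin n) ℤ) : Set (FreeGroup (Fin n × Fˣ × Fˣ)) :=
  {r | (∃ (i : Fin n) (t u v : Fˣ),
          r = FreeGroup.of (i, t, u) * FreeGroup.of (i, t * u, v) *
              (FreeGroup.of (i, t, u * v) * FreeGroup.of (i, u, v))⁻¹) ∨
       (∃ i : Fin n, r = FreeGroup.of (i, 1, 1)) ∨
       (∃ (i : Fin n) (u v : Fˣ),
          r = FreeGroup.of (i, u, v) * (FreeGroup.of (i, u⁻¹, v⁻¹))⁻¹) ∨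
       (∃ (i : Fin n) (u v w : Fˣ), (w : F) = 1 - (u : F) ∧
          r = FreeGroup.of (i, u, v) * (FreeGroup.of (i, u, w * v))⁻¹) ∨
       (∃ (i j : Fin n) (u v : Fˣ), i ≠ j ∧
          r = FreeGroup.of (i, u, v ^ (A j i)) * (FreeGroup.of (j, u ^ (A i j), v))⁻¹) ∨
       (∃ (i j : Fin n) (t u v : Fˣ), i ≠ j ∧
          r = FreeGroup.of (i, t * u, v ^ (A j i)) *
              (FreeGroup.of (i, t, v ^ (A j i)) * FreeGroup.of (i, u, v ^ (A j i)))⁻¹) ∨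
       (∃ (i j : Fin n) (t u v : Fˣ), i ≠ j ∧
          r = FreeGroup.of (i, t ^ (A j i), u * v) *
              (FreeGroup.of (i, t ^ (A j i), u) * FreeGroup.of (i, t ^ (A j i), v))⁻¹)}

/-- `K₂(A,F)`: the abelian group generated by the symbols `c_i(u,v)` subject to (L1)-(L7). -/
def K2A {n : ℕ} (A : Matrix (Fin n) (Fin n) ℤ) : Type :=
  Abelianization (PresentedGroup (K2ARels F A))

noncomputable instance {n : ℕ} (A : Matrix (Fin n) (Fin n) ℤ) : CommGroup (K2A F A) :=
  inferInstanceAs (CommGroup (Abelianization _))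

/-- The generator `c_i(u,v)` of `K₂(A,F)`. -/
def K2A.c {n : ℕ} (A : Matrix (Fin n) (Fin n) ℤ) (i : Fin n) (u v : Fˣ) : K2A F A :=
  Abelianization.of (PresentedGroup.of (i, u, v))

open scoped Classical in
/-- `LGroup F p` is `K₂(F)` when `p` holds and `K₂(2,F)` otherwise.  Taking
`p = "the i-th column of A has an odd entry"` gives the factor `L_i`. -/
noncomputable def LGroup (p : Prop) : Type :=
  Abelianization (PresentedGroup (if p then K2Rels F else K2SLRels F))

noncomputable instance (p : Prop) : CommGroup (LGroup F p) :=
  inferInstanceAs (CommGroup (Abelianization _))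

/-- The symbol `{u,v}` (Steinberg symbol resp. cocycle) in `LGroup F p`. -/
noncomputable def LGroup.sym (p : Prop) (u v : Fˣ) : LGroup F p :=
  Abelianization.of (PresentedGroup.of (u, v))

/-- Relators `x_i^{a_{ji}} = x_j^{a_{ij}}` (`i < j`) for the auxiliary abelian group `G`. -/
def GRels {n : ℕ} (A : Matrix (Fin n) (Fin n) ℤ) : Set (FreeGroup (Fin n)) :=
  {r | ∃ i j : Fin n, i < j ∧ r = FreeGroup.of i ^ (A j i) * (FreeGroup.of j ^ (A i j))⁻¹}

/-- The abelian group `G = ⟨x_1,…,x_n ∣ x_i^{a_{ji}} = x_j^{a_{ij}}, [x_i,x_j] = 1⟩`. -/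
def GGroup {n : ℕ} (A : Matrix (Fin n) (Fin n) ℤ) : Type :=
  Abelianization (PresentedGroup (GRels A))

noncomputable instance {n : ℕ} (A : Matrix (Fin n) (Fin n) ℤ) : CommGroup (GGroup A) :=
  inferInstanceAs (CommGroup (Abelianization _))


namespace K2SLCocycle

variable (F : Type) [Field F]

/-- The canonical map from the free group on symbols to `K₂(2,F)`. -/
noncomputable def symF : FreeGroup (Fˣ × Fˣ) →* K2SL F :=
  (Abelianization.of :
      PresentedGroup (K2SLRels F) →* Abelianization (PresentedGroup (K2SLRels F))).comp
    (PresentedGroup.mk (K2SLRels F))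

lemma symF_of (u v : Fˣ) : symF F (FreeGroup.of (u, v)) = K2SL.sym F u v := rfl

lemma symF_rel {r : FreeGroup (Fˣ × Fˣ)} (hr : r ∈ K2SLRels F) : symF F r = 1 := by
  have h1 : PresentedGroup.mk (K2SLRels F) r = 1 :=
    (QuotientGroup.eq_one_iff r).mpr (Subgroup.subset_normalClosure hr)
  show Abelianization.of (PresentedGroup.mk (K2SLRels F) r) = 1
  rw [h1, map_one]

lemma sB1 (t u v : Fˣ) :
    K2SL.sym F t u * K2SL.sym F (t * u) v = K2SL.sym F t (u * v) * K2SL.sym F u v := by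
  have h := symF_rel F (Or.inl ⟨t, u, v, rfl⟩)
  rw [map_mul, map_mul, map_inv, map_mul, symF_of, symF_of, symF_of, symF_of] at h
  exact mul_inv_eq_one.mp h

lemma sB2 : K2SL.sym F (1 : Fˣ) 1 = 1 := by
  have h := symF_rel F (Or.inr (Or.inl rfl))
  rwa [symF_of] at h

lemma sB3 (u v : Fˣ) : K2SL.sym F u v = K2SL.sym F u⁻¹ v⁻¹ := by
  have h := symF_rel F (Or.inr (Or.inr (Or.inl ⟨u, v, rfl⟩)))
  rw [map_mul, map_inv, symF_of, symF_of] at h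
  exact mul_inv_eq_one.mp h

lemma sB4 (u v w : Fˣ) (h : (w : F) = 1 - (u : F)) :
    K2SL.sym F u v = K2SL.sym F u (w * v) := by
  have h' := symF_rel F (Or.inr (Or.inr (Or.inr ⟨u, v, w, h, rfl⟩)))
  rw [map_mul, map_inv, symF_of, symF_of] at h'
  exact mul_inv_eq_one.mp h'

lemma sym_one_left (v : Fˣ) : K2SL.sym F 1 v = 1 := by
  have h := sB1 F 1 1 v
  rw [sB2, one_mul, one_mul, one_mul] at h
  exact left_eq_mul.mp h

lemma sym_one_right (u : Fˣ) : K2SL.sym F u 1 = 1 := by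
  have h := sB1 F u 1 1
  rw [mul_one, mul_one, sB2, mul_one] at h
  exact mul_eq_right.mp h

lemma sym_neg_mul (u v : Fˣ) : K2SL.sym F u (-u * v) = K2SL.sym F u v := by
  by_cases hu : u = 1
  · subst hu; rw [sym_one_left, sym_one_left]
  · have hu' : (u : F) ≠ 1 := fun h => hu (Units.ext (by rw [h, Units.val_one]))
    have h1 : (1 : F) - (u : F) ≠ 0 := sub_ne_zero.mpr (Ne.symm hu')
    have h2 : (1 : F) - ((u : F))⁻¹ ≠ 0 := by
      rw [sub_ne_zero]
      intro h
      exact hu' (by rw [← inv_inv (u : F), ← h, inv_one])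
    set w : Fˣ := Units.mk0 _ h1 with hwdef
    set w' : Fˣ := Units.mk0 _ h2 with hw'def
    have hw : (w : F) = 1 - (u : F) := rfl
    have hw' : (w' : F) = 1 - ((u⁻¹ : Fˣ) : F) := by
      rw [Units.val_inv_eq_inv_val]; rfl
    have S1 : ∀ x : Fˣ, K2SL.sym F u x = K2SL.sym F u (w * x) := fun x => sB4 F u x w hw
    have S2 : ∀ x : Fˣ, K2SL.sym F u x = K2SL.sym F u (w'⁻¹ * x) := by
      intro x
      have e1 := sB3 F u x
      have e2 := sB4 F u⁻¹ x⁻¹ w' hw'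
      have e3 := sB3 F u⁻¹ (w' * x⁻¹)
      rw [inv_inv, mul_inv_rev, inv_inv, mul_comm x w'⁻¹] at e3
      rw [e1, e2, e3]
    have hmul : w * w'⁻¹ = -u := by
      have hu0 : (u : F) ≠ 0 := Units.ne_zero u
      apply Units.ext
      rw [Units.val_mul, Units.val_neg, Units.val_inv_eq_inv_val, hw]
      have : (w' : F) = 1 - ((u : F))⁻¹ := rfl
      rw [this, ← div_eq_mul_inv, div_eq_iff h2]
      field_simp
      ring
    calc K2SL.sym F u (-u * v) = K2SL.sym F u (w * (w'⁻¹ * v)) := by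
          rw [← mul_assoc, hmul]
      _ = K2SL.sym F u (w'⁻¹ * v) := (S1 _).symm
      _ = K2SL.sym F u v := (S2 v).symm

lemma sym_neg_self (u : Fˣ) : K2SL.sym F u (-u) = 1 := by
  have h := sym_neg_mul F u 1
  rw [mul_one] at h
  rw [h, sym_one_right]

/-- `{u, v²} = {u,v} {v,u}⁻¹`. -/
lemma sym_sq_right (u v : Fˣ) :
    K2SL.sym F u (v * v) * K2SL.sym F v u = K2SL.sym F u v := by
  have h := sB1 F u v (-(u * v))
  rw [sym_neg_self, mul_one] at h
  have e1 : v * -(u * v) = -u * (v * v) := by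
    apply Units.ext
    simp only [Units.val_mul, Units.val_neg]
    ring
  have e2 : -(u * v) = -v * u := by
    apply Units.ext
    simp only [Units.val_mul, Units.val_neg]
    ring
  rw [e1, sym_neg_mul] at h
  rw [e2, sym_neg_mul] at h
  exact h.symm

/-- bimultiplicativity of `σ(u,v) = {u,v}{v,u}⁻¹`, in positive form. -/
lemma sigma_bil (u v w : Fˣ) :
    K2SL.sym F (u * v) w * K2SL.sym F w u * K2SL.sym F w v =
      K2SL.sym F u w * K2SL.sym F v w * K2SL.sym F w (u * v) := by
  have F1 := sB1 F u v w
  have F2 := sB1 F w u v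
  have F3 := sB1 F u w v
  apply mul_right_cancel (b := K2SL.sym F u v * K2SL.sym F (w * u) v)
  calc K2SL.sym F (u * v) w * K2SL.sym F w u * K2SL.sym F w v *
        (K2SL.sym F u v * K2SL.sym F (w * u) v)
      = (K2SL.sym F u v * K2SL.sym F (u * v) w) *
          (K2SL.sym F w u * K2SL.sym F (w * u) v) * K2SL.sym F w v := by
        ac_rfl
    _ = (K2SL.sym F u (v * w) * K2SL.sym F v w) *
          (K2SL.sym F w (u * v) * K2SL.sym F u v) * K2SL.sym F w v := by rw [F1, F2]
    _ = (K2SL.sym F u (w * v) * K2SL.sym F w v) *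
          (K2SL.sym F v w * K2SL.sym F w (u * v) * K2SL.sym F u v) := by
        rw [mul_comm v w]; ac_rfl
    _ = (K2SL.sym F u w * K2SL.sym F (u * w) v) *
          (K2SL.sym F v w * K2SL.sym F w (u * v) * K2SL.sym F u v) := by rw [F3]
    _ = K2SL.sym F u w * K2SL.sym F v w * K2SL.sym F w (u * v) *
          (K2SL.sym F u v * K2SL.sym F (w * u) v) := by
        rw [mul_comm u w]; ac_rfl

/-- `{(v*v) * a, x} = {v*v, x} * {a, x}` : first slot additivity when one factor is a square. -/
lemma sym_sq_mul_left (v a x : Fˣ) :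
    K2SL.sym F (v * v * a) x = K2SL.sym F (v * v) x * K2SL.sym F a x := by
  -- step 1: second-slot: {x, a * (v*v)} = {x, a} * {x, v*v}
  have keyB : ∀ y : Fˣ, K2SL.sym F y (a * (v * v)) = K2SL.sym F y a * K2SL.sym F y (v * v) := by
    intro y
    have hb := sB1 F y a (v * v)
    -- hb : {y,a} * {y*a, v*v} = {y, a*(v*v)} * {a, v*v}
    have e1 := sym_sq_right F (y * a) v
    have e2 := sym_sq_right F a v
    have e3 := sym_sq_right F y v
    -- σ bilinearity instance : {(y*a) ... } use sigma_bil y a v? we need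
    -- {y*a, v*v} * {v, y*a} = {y*a, v}  (e1)
    -- target : {y, a*(v*v)} = {y,a} * {y, v*v}
    have sb := sigma_bil F y a v
    -- sb : {y*a, v} * {v, y} * {v, a} = {y, v} * {a, v} * {v, y*a}
    apply mul_right_cancel (b := K2SL.sym F a (v * v) * K2SL.sym F v (y * a) *
      K2SL.sym F v y * K2SL.sym F v a)
    calc K2SL.sym F y (a * (v * v)) *
          (K2SL.sym F a (v * v) * K2SL.sym F v (y * a) * K2SL.sym F v y * K2SL.sym F v a)
        = (K2SL.sym F y (a * (v * v)) * K2SL.sym F a (v * v)) *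
            K2SL.sym F v (y * a) * K2SL.sym F v y * K2SL.sym F v a := by
          ac_rfl
      _ = (K2SL.sym F y a * K2SL.sym F (y * a) (v * v)) *
            K2SL.sym F v (y * a) * K2SL.sym F v y * K2SL.sym F v a := by rw [← hb]
      _ = K2SL.sym F y a * (K2SL.sym F (y * a) (v * v) * K2SL.sym F v (y * a)) *
            K2SL.sym F v y * K2SL.sym F v a := by
          ac_rfl
      _ = K2SL.sym F y a * K2SL.sym F (y * a) v * K2SL.sym F v y * K2SL.sym F v a := by
          rw [e1]
      _ = K2SL.sym F y a * (K2SL.sym F (y * a) v * K2SL.sym F v y * K2SL.sym F v a) := by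
          ac_rfl
      _ = K2SL.sym F y a * (K2SL.sym F y v * K2SL.sym F a v * K2SL.sym F v (y * a)) := by
          rw [sb]
      _ = K2SL.sym F y a * ((K2SL.sym F y (v * v) * K2SL.sym F v y) *
            (K2SL.sym F a (v * v) * K2SL.sym F v a) * K2SL.sym F v (y * a)) := by
          rw [e3, e2]
      _ = K2SL.sym F y a * K2SL.sym F y (v * v) *
            (K2SL.sym F a (v * v) * K2SL.sym F v (y * a) * K2SL.sym F v y * K2SL.sym F v a) := by
          ac_rfl
  -- step 2: first slot
  have e2 := sym_sq_right F a v     -- {a, v*v} * {v, a} = {a, v}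
  have ex := sym_sq_right F x v
  have hb := sB1 F x a (v * v)      -- not needed? use keyB at y := x
  have sbx := sigma_bil F (v * v) a x
  -- sbx : {(v*v)*a, x} * {x, v*v} * {x, a} = {v*v, x} * {a, x} * {x, (v*v)*a}
  have kx := keyB x               -- {x, a*(v*v)} = {x,a} * {x, v*v}
  have hcomm : a * (v * v) = v * v * a := mul_comm _ _
  rw [hcomm] at kx
  apply mul_right_cancel (b := K2SL.sym F x (v * v) * K2SL.sym F x a)
  calc K2SL.sym F (v * v * a) x * (K2SL.sym F x (v * v) * K2SL.sym F x a)
      = K2SL.sym F (v * v * a) x * K2SL.sym F x (v * v) * K2SL.sym F x a := by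
        rw [← mul_assoc (K2SL.sym F (v * v * a) x)]
    _ = K2SL.sym F (v * v) x * K2SL.sym F a x * K2SL.sym F x (v * v * a) := sbx
    _ = K2SL.sym F (v * v) x * K2SL.sym F a x * (K2SL.sym F x a * K2SL.sym F x (v * v)) := by
        rw [kx]
    _ = K2SL.sym F (v * v) x * K2SL.sym F a x * (K2SL.sym F x (v * v) * K2SL.sym F x a) := by
        rw [mul_comm (K2SL.sym F x a)]

/-- second-slot additivity when first slot is a square. -/
lemma sym_sq_left_add (w y z : Fˣ) :
    K2SL.sym F (w * w) (y * z) = K2SL.sym F (w * w) y * K2SL.sym F (w * w) z := by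
  have hb := sB1 F (w * w) y z
  rw [sym_sq_mul_left F w y z] at hb
  -- hb : {w*w, y} * ({w*w, z} * {y, z}) = {w*w, y*z} * {y, z}
  rw [← mul_assoc] at hb
  exact (mul_right_cancel hb).symm

end K2SLCocycle

namespace K2SLCocycle

/-- part (4) for natural number exponents -/
lemma pow_st (F : Type) [Field F] (u w : Fˣ) (hw : (w : F) = 1 - (u : F)) :
    ∀ (n : ℕ) (v : Fˣ), K2SL.sym F (u ^ n) (w * v) = K2SL.sym F (u ^ n) v := by
  intro n
  induction n with
  | zero => intro v; rw [pow_zero, sym_one_left, sym_one_left]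
  | succ n ih =>
    intro v
    have key : ∀ y : Fˣ, K2SL.sym F (u ^ n) u * K2SL.sym F (u ^ (n + 1)) y =
        K2SL.sym F (u ^ n) (u * y) * K2SL.sym F u y := by
      intro y
      have h := sB1 F (u ^ n) u y
      rwa [← pow_succ] at h
    have h1 := key (w * v)
    have h2 := key v
    rw [show u * (w * v) = w * (u * v) by
      rw [← mul_assoc, mul_comm u w, mul_assoc]] at h1
    rw [ih (u * v)] at h1
    rw [← sB4 F u v w hw] at h1
    rw [← h2] at h1
    exact mul_left_cancel h1

end K2SLCocycle

/-- For any integer `r`, the map `[u,v]_r := {u^r, v}` from `Fˣ × Fˣ` to `K₂(2,F)`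
is a Steinberg cocycle: `[t,u]_r[tu,v]_r = [t,uv]_r[u,v]_r`, `[1,1]_r = 1`,
`[u,v]_r = [u⁻¹,v⁻¹]_r`, and `[u,v]_r = [u,(1-u)v]_r` whenever `u ≠ 1`
(encoded via a unit `w` with `(w : F) = 1 - u`). -/
theorem K2SL.pow_steinberg_cocycle (F : Type) [Field F] (r : ℤ) :
    (∀ t u v : Fˣ,
      K2SL.sym F (t ^ r) u * K2SL.sym F ((t * u) ^ r) v =
        K2SL.sym F (t ^ r) (u * v) * K2SL.sym F (u ^ r) v) ∧
    (K2SL.sym F ((1 : Fˣ) ^ r) 1 = 1) ∧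
    (∀ u v : Fˣ, K2SL.sym F (u ^ r) v = K2SL.sym F ((u⁻¹) ^ r) v⁻¹) ∧
    (∀ u v w : Fˣ, (w : F) = 1 - (u : F) →
      K2SL.sym F (u ^ r) v = K2SL.sym F (u ^ r) (w * v)) := by
  refine ⟨?_, ?_, ?_, ?_⟩
  · -- the cocycle identity
    intro t u v
    rw [mul_zpow]
    rcases Int.even_or_odd r with ⟨s, hs⟩ | ⟨s, hs⟩
    · subst hs
      rw [zpow_add t s s, zpow_add u s s]
      rw [K2SLCocycle.sym_sq_mul_left F (t ^ s) (u ^ s * u ^ s) v,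
        K2SLCocycle.sym_sq_left_add F (t ^ s) u v]
      rw [mul_assoc]
    · subst hs
      have key := K2SLCocycle.sB1 F (t ^ (2 * s + 1)) u v
      have hU : ∀ a : Fˣ, a ^ (2 * s + 1) = a ^ s * a ^ s * a := fun a => by
        rw [two_mul, zpow_add, zpow_add, zpow_one]
      rw [hU u]
      rw [show t ^ (2 * s + 1) * (u ^ s * u ^ s * u)
            = u ^ s * u ^ s * (t ^ (2 * s + 1) * u) by ac_rfl]
      rw [K2SLCocycle.sym_sq_mul_left F (u ^ s) (t ^ (2 * s + 1) * u) v,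
        K2SLCocycle.sym_sq_mul_left F (u ^ s) u v]
      calc K2SL.sym F (t ^ (2 * s + 1)) u *
            (K2SL.sym F (u ^ s * u ^ s) v * K2SL.sym F (t ^ (2 * s + 1) * u) v)
          = K2SL.sym F (u ^ s * u ^ s) v *
              (K2SL.sym F (t ^ (2 * s + 1)) u * K2SL.sym F (t ^ (2 * s + 1) * u) v) := by
            ac_rfl
        _ = K2SL.sym F (u ^ s * u ^ s) v *
              (K2SL.sym F (t ^ (2 * s + 1)) (u * v) * K2SL.sym F u v) := by rw [key]
        _ = K2SL.sym F (t ^ (2 * s + 1)) (u * v) *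
              (K2SL.sym F (u ^ s * u ^ s) v * K2SL.sym F u v) := by
            ac_rfl
  · rw [one_zpow]; exact K2SLCocycle.sB2 F
  · intro u v
    rw [inv_zpow]
    exact K2SLCocycle.sB3 F (u ^ r) v
  · intro u v w hw
    obtain ⟨n, rfl | rfl⟩ := r.eq_nat_or_neg
    · rw [zpow_natCast]
      exact (K2SLCocycle.pow_st F u w hw n v).symm
    · rw [zpow_neg, zpow_natCast]
      have e1 := K2SLCocycle.sB3 F ((u ^ n)⁻¹) v
      rw [inv_inv] at e1
      have e2 := K2SLCocycle.sB3 F ((u ^ n)⁻¹) (w * v)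
      rw [inv_inv, mul_inv_rev, mul_comm v⁻¹ w⁻¹] at e2
      have e3 := K2SLCocycle.pow_st F u w hw n (w⁻¹ * v⁻¹)
      rw [mul_inv_cancel_left] at e3
      rw [e1, e2, ← e3]
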